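/- Let R be a commutative principal ideal domain and M a finitely generated R-module. Then M is weakly uniserial if and only if M ≅ Rⁿ for some n ≥ 0, or M ≅ (R/pR)ⁿ for some prime element p and n ≥ 0, or M ≅ R/pⁿR for some prime element p and n ≥ 0. -/

import Mathlib

def IsWeaklyUniserial (R M : Type*) [Ring R] [AddCommGroup M] [Module R M] : Prop :=
  ∀ N K : Submodule R M,
    (∃ f : N →ₗ[R] K, Function.Injective f) ∨ (∃ f : K →ₗ[R] N, Function.Injective f)

namespace WU17

open Function Submodule

variable {R : Type*} [CommRing R]

lemma smul_mk (I : Ideal R) (r t : R) :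
    r • (Submodule.Quotient.mk t : R ⧸ I) = Submodule.Quotient.mk (r * t) := by
  rw [← Submodule.Quotient.mk_smul, smul_eq_mul]

lemma smul_quot_eq_zero (s : R) (x : R ⧸ Ideal.span {s}) : s • x = 0 := by
  obtain ⟨t, rfl⟩ := Submodule.Quotient.mk_surjective _ x
  rw [smul_mk, Submodule.Quotient.mk_eq_zero]
  exact Ideal.mem_span_singleton.mpr ⟨t, rfl⟩

lemma mk_one_ne_zero {s : R} (hs : ¬ IsUnit s) :
    (Submodule.Quotient.mk 1 : R ⧸ Ideal.span {s}) ≠ 0 := by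
  rw [Ne, Submodule.Quotient.mk_eq_zero]
  intro h1
  exact hs (isUnit_of_dvd_one (Ideal.mem_span_singleton.mp h1))

lemma not_inj_free_to_quot [IsDomain R] {s : R} (hs : s ≠ 0)
    (f : R →ₗ[R] R ⧸ Ideal.span {s}) : ¬ Injective f := by
  intro hf
  apply hs
  have h1 : f s = 0 := by
    have h2 := map_smul f s 1
    rw [smul_eq_mul, mul_one] at h2
    rw [h2, smul_quot_eq_zero]
  exact hf (by rw [h1, map_zero])

lemma not_inj_quot_to_torsionfree {s : R} (hs : ¬ IsUnit s) (hs0 : s ≠ 0)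
    {T : Type*} [AddCommGroup T] [Module R T] [NoZeroSMulDivisors R T]
    (f : (R ⧸ Ideal.span {s}) →ₗ[R] T) : ¬ Injective f := by
  intro hf
  have h1 : s • f (Submodule.Quotient.mk 1) = 0 := by
    rw [← map_smul, smul_quot_eq_zero, map_zero]
  rcases eq_zero_or_eq_zero_of_smul_eq_zero h1 with h | h
  · exact hs0 h
  · exact mk_one_ne_zero hs (hf (by rw [h, map_zero]))

lemma not_inj_quot_to_quot_coprime {s t : R} (hst : IsCoprime s t) (hs : ¬ IsUnit s)
    (f : (R ⧸ Ideal.span {s}) →ₗ[R] R ⧸ Ideal.span {t}) : ¬ Injective f := by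
  intro hf
  obtain ⟨u, v, huv⟩ := hst
  have hsx : s • f (Submodule.Quotient.mk 1) = 0 := by
    rw [← map_smul, smul_quot_eq_zero, map_zero]
  have htx : t • f (Submodule.Quotient.mk 1) = 0 := smul_quot_eq_zero t _
  have hx : f (Submodule.Quotient.mk 1) = 0 := by
    calc f (Submodule.Quotient.mk 1)
        = (u * s + v * t) • f (Submodule.Quotient.mk 1) := by rw [huv, one_smul]
      _ = u • s • f (Submodule.Quotient.mk 1) + v • t • f (Submodule.Quotient.mk 1) := by
          rw [add_smul, mul_smul, mul_smul]
      _ = 0 := by rw [hsx, htx, smul_zero, smul_zero, add_zero]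
  exact mk_one_ne_zero hs (hf (by rw [hx, map_zero]))

/-- multiplication by `q ^ (e-1)` from `R/(q)` to `R/(q^e)`. -/
noncomputable def socle (q : R) (e : ℕ) :
    (R ⧸ Ideal.span {q}) →ₗ[R] R ⧸ Ideal.span {q ^ e} :=
  Submodule.liftQ _ ((Ideal.span {q ^ e}).mkQ.comp (q ^ (e - 1) • LinearMap.id)) (by
    intro x hx
    obtain ⟨y, rfl⟩ := Ideal.mem_span_singleton.mp hx
    simp only [LinearMap.mem_ker, LinearMap.comp_apply, LinearMap.smul_apply, LinearMap.id_apply,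
      mkQ_apply, Submodule.Quotient.mk_eq_zero]
    rcases Nat.eq_zero_or_pos e with he | he
    · subst he
      simp [Ideal.span_singleton_one]
    · apply Ideal.mem_span_singleton.mpr
      have h2 : q ^ e = q ^ (e - 1) * q := by rw [← pow_succ, Nat.sub_add_cancel he]
      rw [h2, smul_eq_mul]
      exact mul_dvd_mul_left _ ⟨y, rfl⟩)

lemma socle_apply (q : R) (e : ℕ) (x : R) :
    socle q e (Submodule.Quotient.mk x) = Submodule.Quotient.mk (q ^ (e - 1) * x) := by
  rw [socle, Submodule.liftQ_apply]
  simp only [LinearMap.comp_apply, LinearMap.smul_apply, LinearMap.id_apply, mkQ_apply,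
    smul_eq_mul]

lemma socle_injective [IsDomain R] {q : R} (hq : q ≠ 0) {e : ℕ} (he : e ≠ 0) :
    Injective (socle q e) := by
  rw [← LinearMap.ker_eq_bot, LinearMap.ker_eq_bot']
  intro m hm
  obtain ⟨x, rfl⟩ := Submodule.Quotient.mk_surjective _ m
  rw [socle_apply, Submodule.Quotient.mk_eq_zero] at hm
  obtain ⟨y, hy⟩ := Ideal.mem_span_singleton.mp hm
  rw [Submodule.Quotient.mk_eq_zero]
  apply Ideal.mem_span_singleton.mpr
  have he' : q ^ e = q ^ (e - 1) * q := by
    rw [← pow_succ, Nat.sub_add_cancel (Nat.pos_of_ne_zero he)]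
  rw [he', mul_assoc] at hy
  exact ⟨y, mul_left_cancel₀ (pow_ne_zero (e - 1) hq) hy⟩

lemma not_inj_two_socle [IsDomain R] {q : R} (hq : Prime q) {e : ℕ} (he : 2 ≤ e)
    (f : (Fin 2 → R ⧸ Ideal.span {q}) →ₗ[R] R ⧸ Ideal.span {q ^ e}) : ¬ Injective f := by
  intro hf
  classical
  have key : ∀ x : R ⧸ Ideal.span {q ^ e}, q • x = 0 → ∃ α : R,
      x = Submodule.Quotient.mk (q ^ (e - 1) * α) := by
    intro x hx
    obtain ⟨t, rfl⟩ := Submodule.Quotient.mk_surjective _ x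
    rw [smul_mk, Submodule.Quotient.mk_eq_zero] at hx
    obtain ⟨y, hy⟩ := Ideal.mem_span_singleton.mp hx
    have he1 : q ^ e = q * q ^ (e - 1) := by
      rw [← pow_succ', Nat.sub_add_cancel (le_trans (by norm_num) he)]
    rw [he1, mul_assoc] at hy
    exact ⟨y, by rw [mul_left_cancel₀ hq.ne_zero hy, mul_comm]⟩
  set o : R ⧸ Ideal.span {q} := Submodule.Quotient.mk 1 with ho
  let s0 : Fin 2 → R ⧸ Ideal.span {q} := Pi.single 0 o
  let s1 : Fin 2 → R ⧸ Ideal.span {q} := Pi.single 1 o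
  have hone : ∀ i : Fin 2, q • (Pi.single i o : Fin 2 → R ⧸ Ideal.span {q}) = 0 := by
    intro i
    funext j
    rw [Pi.smul_apply, Pi.zero_apply]
    by_cases hji : j = i
    · subst hji; rw [Pi.single_eq_same, smul_quot_eq_zero]
    · rw [Pi.single_eq_of_ne hji, smul_zero]
  obtain ⟨α, hα⟩ := key (f s0) (by rw [show q • f s0 = f (q • s0) from (map_smul f q s0).symm,
    show q • s0 = 0 from hone 0, map_zero])
  obtain ⟨β, hβ⟩ := key (f s1) (by rw [show q • f s1 = f (q • s1) from (map_smul f q s1).symm,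
    show q • s1 = 0 from hone 1, map_zero])
  have hzero : f (β • s0 - α • s1) = 0 := by
    rw [map_sub, map_smul, map_smul, hα, hβ, smul_mk, smul_mk,
      show β * (q ^ (e - 1) * α) = α * (q ^ (e - 1) * β) by ring, sub_self]
  have heq : β • s0 - α • s1 = (0 : Fin 2 → R ⧸ Ideal.span {q}) :=
    hf (by rw [hzero, map_zero])
  have h0 := congr_fun heq 0
  have h1 := congr_fun heq 1
  simp only [s0, s1, Pi.sub_apply, Pi.smul_apply, Pi.single_eq_same,
    Pi.single_eq_of_ne (show (0 : Fin 2) ≠ 1 by decide),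
    Pi.single_eq_of_ne (show (1 : Fin 2) ≠ 0 by decide), smul_zero, sub_zero, zero_sub,
    neg_eq_zero, Pi.zero_apply, ho] at h0 h1
  rw [smul_mk, mul_one, Submodule.Quotient.mk_eq_zero] at h0 h1
  obtain ⟨β', rfl⟩ := Ideal.mem_span_singleton.mp h0
  obtain ⟨α', rfl⟩ := Ideal.mem_span_singleton.mp h1
  have hfz : f s0 = 0 := by
    rw [hα, Submodule.Quotient.mk_eq_zero]
    apply Ideal.mem_span_singleton.mpr
    refine ⟨α', ?_⟩
    rw [show q ^ e = q ^ (e - 1) * q by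
      rw [← pow_succ, Nat.sub_add_cancel (le_trans (by norm_num) he)]]
    ring
  have hlast := congr_fun (hf (by rw [hfz, map_zero] :
    f s0 = f (0 : Fin 2 → R ⧸ Ideal.span {q}))) 0
  simp only [s0, Pi.single_eq_same, Pi.zero_apply, ho] at hlast
  exact mk_one_ne_zero hq.not_unit hlast

lemma not_inj_quot_to_pi_socle {q : R} [IsDomain R] (hq : Prime q) {e m : ℕ} (he : 2 ≤ e)
    (f : (R ⧸ Ideal.span {q ^ e}) →ₗ[R] (Fin m → R ⧸ Ideal.span {q})) : ¬ Injective f := by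
  intro hf
  have h1 : f (Submodule.Quotient.mk q) = 0 := by
    have h2 : (Submodule.Quotient.mk q : R ⧸ Ideal.span {q ^ e}) =
        q • Submodule.Quotient.mk 1 := by rw [smul_mk, mul_one]
    rw [h2, map_smul]
    funext i
    rw [Pi.smul_apply, smul_quot_eq_zero, Pi.zero_apply]
  have h2 := hf (by rw [h1, map_zero] :
    f (Submodule.Quotient.mk q) = f (0 : R ⧸ Ideal.span {q ^ e}))
  rw [Submodule.Quotient.mk_eq_zero] at h2
  obtain ⟨c, hc⟩ := Ideal.mem_span_singleton.mp h2
  have h3 : q * 1 = q * (q ^ (e - 1) * c) := by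
    calc q * 1 = q := mul_one q
      _ = q ^ e * c := hc
      _ = q * (q ^ (e - 1) * c) := by
          rw [show q ^ e = q * q ^ (e - 1) by
            rw [← pow_succ', Nat.sub_add_cancel (le_trans (by norm_num) he)], mul_assoc]
  have h4 := mul_left_cancel₀ hq.ne_zero h3
  have h5 : IsUnit (q ^ (e - 1)) := IsUnit.of_mul_eq_one _ h4.symm
  have h6 : e - 1 ≠ 0 := by omega
  exact hq.not_isUnit ((isUnit_pow_iff h6).mp h5)

/-! ### generic embedding tools -/

lemma emb_congr {A B A' B' : Type*} [AddCommGroup A] [Module R A] [AddCommGroup B] [Module R B]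
    [AddCommGroup A'] [Module R A'] [AddCommGroup B'] [Module R B']
    (e1 : A' ≃ₗ[R] A) (e2 : B ≃ₗ[R] B') (h : ∃ f : A →ₗ[R] B, Injective f) :
    ∃ f : A' →ₗ[R] B', Injective f := by
  obtain ⟨f, hf⟩ := h
  refine ⟨(e2.toLinearMap.comp f).comp e1.toLinearMap, ?_⟩
  simp only [LinearMap.coe_comp, LinearEquiv.coe_coe]
  exact (e2.injective.comp hf).comp e1.injective

lemma subsingleton_emb {A B : Type*} [AddCommGroup A] [Module R A] [AddCommGroup B] [Module R B]
    [Subsingleton A] : ∃ f : A →ₗ[R] B, Injective f :=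
  ⟨0, fun a b _ => Subsingleton.elim a b⟩

lemma wu_congr {M M' : Type*} [AddCommGroup M] [Module R M] [AddCommGroup M'] [Module R M']
    (e : M ≃ₗ[R] M') (h : IsWeaklyUniserial R M') : IsWeaklyUniserial R M := by
  intro N K
  rcases h (N.map (e : M →ₗ[R] M')) (K.map (e : M →ₗ[R] M')) with h' | h'
  · exact Or.inl (emb_congr (e.submoduleMap N) (e.submoduleMap K).symm h')
  · exact Or.inr (emb_congr (e.submoduleMap K) (e.submoduleMap N).symm h')

lemma wu_embed {M A B : Type*} [AddCommGroup M] [Module R M] [AddCommGroup A] [Module R A]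
    [AddCommGroup B] [Module R B] (h : IsWeaklyUniserial R M)
    (f : A →ₗ[R] M) (hf : Injective f) (g : B →ₗ[R] M) (hg : Injective g) :
    (∃ φ : A →ₗ[R] B, Injective φ) ∨ (∃ φ : B →ₗ[R] A, Injective φ) := by
  rcases h (LinearMap.range f) (LinearMap.range g) with h' | h'
  · exact Or.inl (emb_congr (LinearEquiv.ofInjective f hf)
      (LinearEquiv.ofInjective g hg).symm h')
  · exact Or.inr (emb_congr (LinearEquiv.ofInjective g hg)
      (LinearEquiv.ofInjective f hf).symm h')

/-! ### the three positive cases -/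

lemma pi_fin_emb (S : Type*) [CommRing S] (A : Type*) [AddCommGroup A] [Module S A]
    {a b : ℕ} (h : a ≤ b) : ∃ f : (Fin a → A) →ₗ[S] (Fin b → A), Injective f := by
  rcases Nat.eq_zero_or_pos a with rfl | ha
  · exact subsingleton_emb
  · refine ⟨LinearMap.funLeft S A (fun j : Fin b => if h2 : (j : ℕ) < a then ⟨j, h2⟩ else ⟨0, ha⟩),
      LinearMap.funLeft_injective_of_surjective S A _ fun i => ?_⟩
    exact ⟨⟨(i : ℕ), lt_of_lt_of_le i.2 h⟩, by simp [i.2]⟩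

lemma emb_of_finrank_le {S : Type*} [CommRing S] [Nontrivial S] {A B : Type*}
    [AddCommGroup A] [Module S A] [AddCommGroup B] [Module S B]
    [Module.Free S A] [Module.Finite S A] [Module.Free S B] [Module.Finite S B]
    (h : Module.finrank S A ≤ Module.finrank S B) : ∃ f : A →ₗ[S] B, Injective f := by
  have bA := Module.finBasis S A
  have bB := Module.finBasis S B
  exact emb_congr bA.equivFun bB.equivFun.symm (pi_fin_emb S S h)

lemma wu_free (S : Type*) [CommRing S] [IsDomain S] [IsPrincipalIdealRing S] (n : ℕ) :
    IsWeaklyUniserial S (Fin n → S) := by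
  intro N K
  haveI : Module.Finite S N := Module.Finite.iff_fg.mpr (IsNoetherian.noetherian N)
  haveI : Module.Finite S K := Module.Finite.iff_fg.mpr (IsNoetherian.noetherian K)
  rcases le_total (Module.finrank S N) (Module.finrank S K) with h | h
  · exact Or.inl (emb_of_finrank_le h)
  · exact Or.inr (emb_of_finrank_le h)

/-- an `R`-submodule of a module over `R ⧸ I` is an `R ⧸ I`-submodule. -/
def extendQuot (I : Ideal R) {V : Type*} [AddCommGroup V] [Module R V] [Module (R ⧸ I) V]
    [IsScalarTower R (R ⧸ I) V] (N : Submodule R V) : Submodule (R ⧸ I) V where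
  carrier := N
  add_mem' := fun h1 h2 => N.add_mem h1 h2
  zero_mem' := N.zero_mem
  smul_mem' := by
    intro c x hx
    obtain ⟨r, rfl⟩ := Ideal.Quotient.mk_surjective c
    have h : (Ideal.Quotient.mk I r) • x = r • x := by
      rw [← Ideal.Quotient.algebraMap_eq, algebraMap_smul]
    rw [h]
    exact N.smul_mem r hx

lemma extend_emb (I : Ideal R) {V : Type*} [AddCommGroup V] [Module R V] [Module (R ⧸ I) V]
    [IsScalarTower R (R ⧸ I) V] {N K : Submodule R V}
    (f : (extendQuot I N) →ₗ[R ⧸ I] (extendQuot I K)) (hf : Injective f) :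
    ∃ g : N →ₗ[R] K, Injective g := by
  refine ⟨{ toFun := fun x => ⟨(f ⟨x.1, x.2⟩ : V), (f ⟨x.1, x.2⟩).2⟩,
            map_add' := ?_, map_smul' := ?_ }, ?_⟩
  · intro x y
    apply Subtype.ext
    show (f ⟨(x + y).1, (x + y).2⟩ : V) = (f ⟨x.1, x.2⟩ : V) + (f ⟨y.1, y.2⟩ : V)
    rw [show (⟨(x + y).1, (x + y).2⟩ : extendQuot I N) = ⟨x.1, x.2⟩ + ⟨y.1, y.2⟩ from rfl,
      map_add]
    rfl
  · intro r x
    apply Subtype.ext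
    show (f ⟨(r • x).1, (r • x).2⟩ : V) = r • (f ⟨x.1, x.2⟩ : V)
    have h1 : (⟨(r • x).1, (r • x).2⟩ : extendQuot I N)
        = (algebraMap R (R ⧸ I) r) • (⟨x.1, x.2⟩ : extendQuot I N) := by
      apply Subtype.ext
      show r • (x.1 : V) = ((algebraMap R (R ⧸ I) r) • (⟨x.1, x.2⟩ : extendQuot I N) : V)
      rw [show ((algebraMap R (R ⧸ I) r) • (⟨x.1, x.2⟩ : extendQuot I N) : V)
          = (algebraMap R (R ⧸ I) r) • (x.1 : V) from rfl, algebraMap_smul]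
    rw [h1, map_smul]
    rw [show ((algebraMap R (R ⧸ I) r • f ⟨x.1, x.2⟩ : extendQuot I K) : V)
        = (algebraMap R (R ⧸ I) r) • (f ⟨x.1, x.2⟩ : V) from rfl, algebraMap_smul]
  · intro x y hxy
    have h1 : f ⟨x.1, x.2⟩ = f ⟨y.1, y.2⟩ := Subtype.ext (congrArg Subtype.val hxy)
    have h2 := hf h1
    exact Subtype.ext (congrArg Subtype.val h2)

lemma wu_quot_field [IsDomain R] [IsPrincipalIdealRing R] {p : R} (hp : Prime p) (n : ℕ) :
    IsWeaklyUniserial R (Fin n → R ⧸ Ideal.span {p}) := by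
  haveI : (Ideal.span {p}).IsMaximal :=
    PrincipalIdealRing.isMaximal_of_irreducible hp.irreducible
  letI : Field (R ⧸ Ideal.span {p}) := Ideal.Quotient.field _
  intro N K
  rcases wu_free (R ⧸ Ideal.span {p}) n (extendQuot (Ideal.span {p}) N)
      (extendQuot (Ideal.span {p}) K) with ⟨f, hf⟩ | ⟨f, hf⟩
  · left
    exact extend_emb _ f hf
  · right
    exact extend_emb _ f hf

lemma wu_cyclic [IsDomain R] [IsPrincipalIdealRing R] {p : R} (hp : Prime p) (n : ℕ) :
    IsWeaklyUniserial R (R ⧸ Ideal.span {p ^ n}) := by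
  intro N K
  have key : ∀ L : Submodule R (R ⧸ Ideal.span {p ^ n}), ∃ i : ℕ,
      Submodule.comap (Ideal.span {p ^ n}).mkQ L = Ideal.span {p ^ i} := by
    intro L
    obtain ⟨a, ha⟩ := (IsPrincipalIdealRing.principal
      (Submodule.comap (Ideal.span {p ^ n}).mkQ L)).principal
    have hmem : p ^ n ∈ Submodule.comap (Ideal.span {p ^ n}).mkQ L := by
      have h0 : (Ideal.span {p ^ n}).mkQ (p ^ n) = 0 := by
        rw [mkQ_apply]
        exact (Submodule.Quotient.mk_eq_zero _).mpr (Ideal.mem_span_singleton.mpr dvd_rfl)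
      rw [Submodule.mem_comap, h0]
      exact L.zero_mem
    rw [ha] at hmem
    have hdvd : a ∣ p ^ n := by
      rw [Ideal.submodule_span_eq] at hmem
      exact Ideal.mem_span_singleton.mp hmem
    obtain ⟨i, _, hia⟩ := (dvd_prime_pow hp n).mp hdvd
    exact ⟨i, by rw [ha, Ideal.submodule_span_eq,
      Ideal.span_singleton_eq_span_singleton.mpr hia]⟩
  obtain ⟨i, hi⟩ := key N
  obtain ⟨j, hj⟩ := key K
  have hsurj := Submodule.mkQ_surjective (Ideal.span {p ^ n})
  rcases le_total i j with h | h
  · right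
    have hle : Submodule.comap (Ideal.span {p ^ n}).mkQ K ≤
        Submodule.comap (Ideal.span {p ^ n}).mkQ N := by
      rw [hi, hj]
      exact Ideal.span_singleton_le_span_singleton.mpr (pow_dvd_pow p h)
    exact ⟨Submodule.inclusion ((Submodule.comap_le_comap_iff_of_surjective hsurj).mp hle),
      Submodule.inclusion_injective _⟩
  · left
    have hle : Submodule.comap (Ideal.span {p ^ n}).mkQ N ≤
        Submodule.comap (Ideal.span {p ^ n}).mkQ K := by
      rw [hi, hj]
      exact Ideal.span_singleton_le_span_singleton.mpr (pow_dvd_pow p h)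
    exact ⟨Submodule.inclusion ((Submodule.comap_le_comap_iff_of_surjective hsurj).mp hle),
      Submodule.inclusion_injective _⟩

/-! ### equivalence helpers -/

def dropRight (A B : Type*) [AddCommGroup A] [Module R A] [AddCommGroup B] [Module R B]
    [Subsingleton B] : (A × B) ≃ₗ[R] A where
  toFun := Prod.fst
  map_add' _ _ := rfl
  map_smul' _ _ := rfl
  invFun a := (a, 0)
  left_inv x := by
    cases x with
    | mk a b => simp [Subsingleton.elim (0 : B) b]
  right_inv a := rfl

def dropLeft (A B : Type*) [AddCommGroup A] [Module R A] [AddCommGroup B] [Module R B]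
    [Subsingleton A] : (A × B) ≃ₗ[R] B :=
  (LinearEquiv.prodComm R A B).trans (dropRight B A)

def dropTrivial {ι : Type*} {φ : ι → Type*} [∀ i, AddCommGroup (φ i)] [∀ i, Module R (φ i)]
    (P : ι → Prop) [DecidablePred P] (hs : ∀ i, ¬ P i → Subsingleton (φ i)) :
    (∀ i, φ i) ≃ₗ[R] ∀ j : {i // P i}, φ j.1 where
  toFun f j := f j.1
  map_add' _ _ := rfl
  map_smul' _ _ := rfl
  invFun g i := if h : P i then g ⟨i, h⟩ else 0
  left_inv f := by
    funext i
    by_cases h : P i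
    · simp [h]
    · haveI := hs i h
      exact Subsingleton.elim _ _
  right_inv g := by
    funext j
    simp [j.2]

def collapseUnique {ι : Type*} [DecidableEq ι] (φ : ι → Type*) [∀ i, AddCommGroup (φ i)]
    [∀ i, Module R (φ i)] (i₁ : ι) (hs : ∀ j, j ≠ i₁ → Subsingleton (φ j)) :
    (∀ i, φ i) ≃ₗ[R] φ i₁ where
  toFun f := f i₁
  map_add' _ _ := rfl
  map_smul' _ _ := rfl
  invFun x := Function.update (fun j => (0 : φ j)) i₁ x
  left_inv f := by
    funext j
    by_cases hj : j = i₁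
    · subst hj
      simp
    · haveI := hs j hj
      exact Subsingleton.elim _ _
  right_inv x := by simp

end WU17

open WU17 Function Submodule

theorem stmt_17 {R M : Type*} [CommRing R] [IsDomain R] [IsPrincipalIdealRing R]
    [AddCommGroup M] [Module R M] [Module.Finite R M] :
    IsWeaklyUniserial R M ↔
      (∃ n : ℕ, Nonempty (M ≃ₗ[R] (Fin n → R))) ∨
      (∃ (p : R) (n : ℕ), Prime p ∧
        Nonempty (M ≃ₗ[R] (Fin n → R ⧸ Ideal.span {p}))) ∨
      (∃ (p : R) (n : ℕ), Prime p ∧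
        Nonempty (M ≃ₗ[R] (R ⧸ Ideal.span {p ^ n}))) := by
  classical
  constructor
  · intro h
    -- structure theorem applied to `ULift M`
    haveI : Module.Finite R (ULift.{u_1} M) :=
      Module.Finite.equiv (ULift.moduleEquiv (R := R) (M := M)).symm
    obtain ⟨n, ι, hfin, p, hp, e, ⟨eqv0⟩⟩ :=
      Module.equiv_free_prod_directSum (R := R) (M := ULift.{u_1} M)
    haveI := hfin
    have hP : ∀ i, Prime (p i) := fun i =>
      (UniqueFactorizationMonoid.irreducible_iff_prime).mp (hp i)
    let eqv1 : M ≃ₗ[R] (Fin n →₀ R) × DirectSum ι (fun i => R ⧸ (R ∙ p i ^ e i)) :=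
      (ULift.moduleEquiv (R := R) (M := M)).symm.trans eqv0
    let eqv3 : M ≃ₗ[R] (Fin n → R) × ∀ i : ι, R ⧸ Ideal.span {p i ^ e i} :=
      eqv1.trans ((Finsupp.linearEquivFunOnFinite R R (Fin n)).prodCongr
        ((DirectSum.linearEquivFunOnFintype R ι (fun i => R ⧸ (R ∙ p i ^ e i))).trans
          (LinearEquiv.piCongrRight fun i =>
            Submodule.quotEquivOfEq _ _ (Ideal.submodule_span_eq))))
    -- torsion witnesses
    have hwit : ∀ i : ι, Injective ⇑(eqv3.symm.toLinearMap ∘ₗ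
        ((LinearMap.inr R (Fin n → R) (∀ i : ι, R ⧸ Ideal.span {p i ^ e i})) ∘ₗ
          (LinearMap.single R (fun i : ι => R ⧸ Ideal.span {p i ^ e i}) i))) := by
      intro i
      simp only [LinearMap.coe_comp, LinearEquiv.coe_coe]
      exact eqv3.symm.injective.comp (LinearMap.inr_injective.comp
        (LinearMap.ker_eq_bot.mp (LinearMap.ker_single R _ i)))
    by_cases hE : ∀ i, e i = 0
    · -- free case
      haveI hss : ∀ i, Subsingleton (R ⧸ Ideal.span {p i ^ e i}) := by
        intro i
        have : Ideal.span {p i ^ e i} = ⊤ := by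
          rw [hE i, pow_zero, Ideal.span_singleton_one]
        exact Submodule.Quotient.subsingleton_iff.mpr this
      left
      exact ⟨n, ⟨eqv3.trans (dropRight _ _)⟩⟩
    · push_neg at hE
      obtain ⟨i₀, hi₀⟩ := hE
      -- n = 0
      have hn : n = 0 := by
        by_contra hn0
        have hfree : Injective ⇑(eqv3.symm.toLinearMap ∘ₗ
            ((LinearMap.inl R (Fin n → R) (∀ i : ι, R ⧸ Ideal.span {p i ^ e i})) ∘ₗ
              (LinearMap.single R (fun _ : Fin n => R) ⟨0, Nat.pos_of_ne_zero hn0⟩))) := by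
          simp only [LinearMap.coe_comp, LinearEquiv.coe_coe]
          exact eqv3.symm.injective.comp (LinearMap.inl_injective.comp
            (LinearMap.ker_eq_bot.mp (LinearMap.ker_single R _ _)))
        rcases wu_embed h _ hfree _ (hwit i₀) with ⟨φ, hφ⟩ | ⟨φ, hφ⟩
        · exact not_inj_free_to_quot (pow_ne_zero _ (hP i₀).ne_zero) φ hφ
        · exact not_inj_quot_to_torsionfree
            (fun hu => (hP i₀).not_isUnit ((isUnit_pow_iff hi₀).mp hu))
            (pow_ne_zero _ (hP i₀).ne_zero) φ hφ
      subst hn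
      set q : R := p i₀ with hqdef
      have hq : Prime q := hP i₀
      -- all primes with nonzero exponent are associated to q
      have hspan : ∀ i, Ideal.span {p i ^ e i} = Ideal.span {q ^ e i} := by
        intro i
        by_cases hei : e i = 0
        · rw [hei, pow_zero, pow_zero]
        · have hassoc : Associated (p i) q := by
            by_contra hna
            have hco : IsCoprime (p i) q := (hp i).coprime_iff_not_dvd.mpr
              (fun hdvd => hna ((hp i).associated_of_dvd (hp i₀) hdvd))
            rcases wu_embed h _ (hwit i) _ (hwit i₀) with ⟨φ, hφ⟩ | ⟨φ, hφ⟩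
            · exact not_inj_quot_to_quot_coprime hco.pow
                (fun hu => (hP i).not_isUnit ((isUnit_pow_iff hei).mp hu)) φ hφ
            · exact not_inj_quot_to_quot_coprime hco.symm.pow
                (fun hu => (hP i₀).not_isUnit ((isUnit_pow_iff hi₀).mp hu)) φ hφ
          exact Ideal.span_singleton_eq_span_singleton.mpr hassoc.pow_pow
      let eqv4 : M ≃ₗ[R] ∀ i : ι, R ⧸ Ideal.span {q ^ e i} :=
        (eqv3.trans (dropLeft _ _)).trans
          (LinearEquiv.piCongrRight fun i => Submodule.quotEquivOfEq _ _ (hspan i))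
      have hwit4 : ∀ i : ι, Injective ⇑(eqv4.symm.toLinearMap ∘ₗ
          (LinearMap.single R (fun i : ι => R ⧸ Ideal.span {q ^ e i}) i)) := by
        intro i
        simp only [LinearMap.coe_comp, LinearEquiv.coe_coe]
        exact eqv4.symm.injective.comp (LinearMap.ker_eq_bot.mp (LinearMap.ker_single R _ i))
      by_cases hone : ∀ i, e i ≤ 1
      · -- semisimple case
        right; left
        have hsub2 : ∀ i, ¬ (e i ≠ 0) → Subsingleton (R ⧸ Ideal.span {q ^ e i}) := by
          intro i hi
          have hei : e i = 0 := not_ne_iff.mp hi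
          have : Ideal.span {q ^ e i} = ⊤ := by
            rw [hei, pow_zero, Ideal.span_singleton_one]
          exact Submodule.Quotient.subsingleton_iff.mpr this
        let E2 : (∀ i : ι, R ⧸ Ideal.span {q ^ e i}) ≃ₗ[R]
            (Fin (Fintype.card {i // e i ≠ 0}) → R ⧸ Ideal.span {q}) :=
          (dropTrivial (fun i => e i ≠ 0) hsub2).trans
            ((LinearEquiv.piCongrRight fun j => Submodule.quotEquivOfEq _ _ (by
              have h1 : e j.1 = 1 := Nat.le_antisymm (hone j.1) (Nat.one_le_iff_ne_zero.mpr j.2)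
              rw [h1, pow_one])).trans
              (LinearEquiv.funCongrLeft R _ (Fintype.equivFin {i // e i ≠ 0}).symm))
        exact ⟨q, Fintype.card {i // e i ≠ 0}, hq, ⟨eqv4.trans E2⟩⟩
      · -- cyclic case
        push_neg at hone
        obtain ⟨i₁, hi₁⟩ := hone
        have hi₁2 : 2 ≤ e i₁ := hi₁
        right; right
        refine ⟨q, e i₁, hq, ?_⟩
        have huniq : ∀ j, j ≠ i₁ → e j = 0 := by
          intro j hj
          by_contra hj0
          -- build the (R/q)² embedding
          let W : ι → Type _ := fun i => R ⧸ Ideal.span {q ^ e i}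
          let F : (Fin 2 → R ⧸ Ideal.span {q}) →ₗ[R] ∀ i, W i :=
            (LinearMap.single R W i₁ ∘ₗ (socle q (e i₁)) ∘ₗ LinearMap.proj 0) +
            (LinearMap.single R W j ∘ₗ (socle q (e j)) ∘ₗ LinearMap.proj 1)
          have hF : Injective F := by
            rw [← LinearMap.ker_eq_bot, LinearMap.ker_eq_bot']
            intro x hx
            have h1 := congr_fun hx i₁
            have h2 := congr_fun hx j
            simp only [F, LinearMap.add_apply, LinearMap.coe_comp, Function.comp_apply,
              LinearMap.coe_single, LinearMap.proj_apply, Pi.add_apply, Pi.zero_apply,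
              Pi.single_eq_same, Pi.single_eq_of_ne hj, Pi.single_eq_of_ne (Ne.symm hj),
              add_zero, zero_add] at h1 h2
            have hx0 : x 0 = 0 := socle_injective hq.ne_zero (by omega : e i₁ ≠ 0)
              (by rw [h1, map_zero])
            have hx1 : x 1 = 0 := socle_injective hq.ne_zero hj0 (by rw [h2, map_zero])
            funext k
            fin_cases k
            · exact hx0
            · exact hx1
          have hFM : Injective ⇑(eqv4.symm.toLinearMap ∘ₗ F) := by
            simp only [LinearMap.coe_comp, LinearEquiv.coe_coe]
            exact eqv4.symm.injective.comp hF
          rcases wu_embed h _ hFM _ (hwit4 i₁) with ⟨φ, hφ⟩ | ⟨φ, hφ⟩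
          · exact not_inj_two_socle hq hi₁2 φ hφ
          · exact not_inj_quot_to_pi_socle hq hi₁2 φ hφ
        have hsub : ∀ j, j ≠ i₁ → Subsingleton (R ⧸ Ideal.span {q ^ e j}) := by
          intro j hj
          have : Ideal.span {q ^ e j} = ⊤ := by
            rw [huniq j hj, pow_zero, Ideal.span_singleton_one]
          exact Submodule.Quotient.subsingleton_iff.mpr this
        exact ⟨eqv4.trans (collapseUnique _ i₁ hsub)⟩
  · rintro (⟨n, ⟨eqv⟩⟩ | ⟨p, n, hp, ⟨eqv⟩⟩ | ⟨p, n, hp, ⟨eqv⟩⟩)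
    · exact wu_congr eqv (wu_free R n)
    · exact wu_congr eqv (wu_quot_field hp n)
    · exact wu_congr eqv (wu_cyclic hp n)
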